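/- Let k be a positive integer, let x₀ < x₁ < ⋯ < x_k be real numbers, and let f be of class C^k on [x₀, x_k]. Let P(x) = b_k·x^k + ⋯ + b₀ be the unique polynomial of degree ≤ k such that P(x_i) = f(x_i) for i = 0, …, k. Then there exists a real number t ∈ [x₀, x_k] such that b_k = f^{(k)}(t)/k!. -/

import Mathlib

open Set Polynomial

lemma contDiff_poly_eval (p : Polynomial ℝ) (n : WithTop ℕ∞) :
    ContDiff ℝ n fun y => p.eval y := by
  induction p using Polynomial.induction_on' with
  | add p q hp hq => simpa using hp.add hq
  | monomial m a =>
      simpa [Polynomial.eval_monomial] using (contDiff_const (c := a)).mul (contDiff_id.pow m)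

lemma iteratedDerivWithin_poly_eval (n : ℕ) (p : Polynomial ℝ) {s : Set ℝ}
    (hu : UniqueDiffOn ℝ s) {t : ℝ} (ht : t ∈ s) :
    iteratedDerivWithin n (fun y => p.eval y) s t = (Polynomial.derivative^[n] p).eval t := by
  induction n generalizing p with
  | zero => simp
  | succ n ih =>
      rw [iteratedDerivWithin_succ']
      have hcongr : Set.EqOn (derivWithin (fun y => p.eval y) s)
          (fun y => p.derivative.eval y) s := fun y hy =>
        p.derivWithin (hu.uniqueDiffWithinAt hy)
      have := iteratedDerivWithin_congr (n := n) hcongr ht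
      rw [this, ih p.derivative, Function.iterate_succ_apply]

lemma iterated_rolle (n : ℕ) : ∀ (a b : ℝ), a < b → ∀ (g : ℝ → ℝ),
    ContDiffOn ℝ n g (Set.Icc a b) → ∀ (y : Fin (n+1) → ℝ), StrictMono y →
    (∀ i, y i ∈ Set.Icc a b) → (∀ i, g (y i) = 0) →
    ∃ t ∈ Set.Icc a b, iteratedDerivWithin n g (Set.Icc a b) t = 0 := by
  induction n with
  | zero =>
      intro a b _ g _ y _ hmem hzero
      exact ⟨y 0, hmem 0, by simpa using hzero 0⟩
  | succ n ih =>
      intro a b hab g hg y hy hmem hzero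
      have hu : UniqueDiffOn ℝ (Set.Icc a b) := uniqueDiffOn_Icc hab
      have key : ∀ i : Fin (n+1), ∃ z ∈ Set.Ioo (y i.castSucc) (y i.succ), deriv g z = 0 := by
        intro i
        refine exists_deriv_eq_zero (hy i.castSucc_lt_succ) ?_ ?_
        · exact hg.continuousOn.mono
            (Set.Icc_subset_Icc (hmem i.castSucc).1 (hmem i.succ).2)
        · rw [hzero i.castSucc, hzero i.succ]
      choose z hz hz0 using key
      have hzmem : ∀ i, z i ∈ Set.Ioo a b := fun i =>
        ⟨lt_of_le_of_lt (hmem i.castSucc).1 (hz i).1,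
         lt_of_lt_of_le (hz i).2 (hmem i.succ).2⟩
      have hzmono : StrictMono z := by
        intro i j hij
        calc z i < y i.succ := (hz i).2
          _ ≤ y j.castSucc := hy.monotone (by
              simp only [Fin.le_def, Fin.val_succ, Fin.coe_castSucc]
              exact hij)
          _ < z j := (hz j).1
      have hg' : ContDiffOn ℝ n (derivWithin g (Set.Icc a b)) (Set.Icc a b) :=
        hg.derivWithin hu (by exact_mod_cast le_refl (n + 1 : ℕ))
      have hz0' : ∀ i, derivWithin g (Set.Icc a b) (z i) = 0 := fun i => by
        rw [derivWithin_of_mem_nhds (Icc_mem_nhds (hzmem i).1 (hzmem i).2)]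
        exact hz0 i
      obtain ⟨t, ht, h0⟩ := ih a b hab _ hg' z hzmono
        (fun i => Set.Ioo_subset_Icc_self (hzmem i)) hz0'
      exact ⟨t, ht, by rw [iteratedDerivWithin_succ']; exact h0⟩

theorem stmt_5 (k : ℕ) (hk : 0 < k) (x : Fin (k+1) → ℝ) (hx : StrictMono x)
    (f : ℝ → ℝ)
    (hf : ContDiffOn ℝ k f (Set.Icc (x 0) (x (Fin.last k))))
    (P : Polynomial ℝ) (hdeg : P.natDegree ≤ k)
    (hP : ∀ i, P.eval (x i) = f (x i)) :
    ∃ t ∈ Set.Icc (x 0) (x (Fin.last k)),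
      P.coeff k =
        iteratedDerivWithin k f (Set.Icc (x 0) (x (Fin.last k))) t / (k.factorial : ℝ) := by
  set s := Set.Icc (x 0) (x (Fin.last k)) with hs
  have hab : x 0 < x (Fin.last k) := hx (by
    simp only [Fin.lt_def, Fin.val_zero, Fin.val_last]; exact hk)
  have hu : UniqueDiffOn ℝ s := uniqueDiffOn_Icc hab
  have hPc : ContDiffOn ℝ k (fun y => P.eval y) s :=
    (contDiff_poly_eval P k).contDiffOn
  have hg : ContDiffOn ℝ k (f - fun y => P.eval y) s := hf.sub hPc
  have hmem : ∀ i, x i ∈ s := fun i =>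
    ⟨hx.monotone (Fin.zero_le i), hx.monotone (Fin.le_last i)⟩
  have hzero : ∀ i, (f - fun y => P.eval y) (x i) = 0 := fun i => by
    simp [Pi.sub_apply, hP i]
  obtain ⟨t, ht, h0⟩ := iterated_rolle k (x 0) (x (Fin.last k)) hab _ hg x hx hmem hzero
  rw [iteratedDerivWithin_sub ht hu (hf.contDiffWithinAt ht) (hPc.contDiffWithinAt ht)] at h0
  have hpoly : iteratedDerivWithin k (fun y => P.eval y) s t
      = (k.factorial : ℝ) * P.coeff k := by
    rw [iteratedDerivWithin_poly_eval k P hu ht]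
    have hdeg0 : (Polynomial.derivative^[k] P).natDegree = 0 :=
      Nat.le_zero.mp ((P.natDegree_iterate_derivative k).trans (by omega))
    rw [Polynomial.eq_C_of_natDegree_le_zero hdeg0.le, Polynomial.eval_C,
      Polynomial.coeff_iterate_derivative]
    simp [Nat.descFactorial_self, mul_comm]
  rw [hpoly, sub_eq_zero] at h0
  refine ⟨t, ht, ?_⟩
  have hfac : (k.factorial : ℝ) ≠ 0 := Nat.cast_ne_zero.mpr k.factorial_ne_zero
  rw [h0, mul_div_cancel_left₀ _ hfac]
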